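/- In the repeated insertion model with dispersion 0 ≤ φ < 1, the probability that item j is ranked before item 1 (for j > 1) equals (j - 1 - j·φ + φ^{j}) / (φ^{j-1}·(1-φ)^2·(1+φ+...+φ^{j-2})·(1+φ+...+φ^{j-1})) · φ^{2(j-1)}, equivalently it equals φ^{j-1}·(j-1 - jφ + φ^j) / ((1-φ)^2·(1+...+φ^{j-2})·(1+...+φ^{j-1})). -/

import Mathlib

/-- Insertion probability in the repeated insertion model. -/
noncomputable def insP (φ : ℝ) (s l : ℕ) : ℝ :=
  φ ^ (s - l) / ∑ t ∈ Finset.range s, φ ^ t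

/-- Probability that item 1 is at position `r` after `s` insertions. -/
noncomputable def qpos (φ : ℝ) : ℕ → ℕ → ℝ
  | 0, _ => 0
  | 1, r => if r = 1 then 1 else 0
  | (s+2), r =>
      qpos φ (s+1) r * (∑ l ∈ Finset.Icc (r+1) (s+2), insP φ (s+2) l)
      + qpos φ (s+1) (r-1) * (∑ l ∈ Finset.Icc 1 (r-1), insP φ (s+2) l)

open Finset in
lemma Zpos (φ : ℝ) (hφ0 : 0 ≤ φ) (s : ℕ) (hs : 1 ≤ s) :
    0 < ∑ t ∈ Finset.range s, φ ^ t := by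
  have h0 : (0:ℕ) ∈ Finset.range s := by simp; omega
  have := Finset.single_le_sum (f := fun t => φ ^ t)
    (fun i _ => pow_nonneg hφ0 i) h0
  simpa using lt_of_lt_of_le one_pos (by simpa using this)

lemma sum_geom_Icc (φ : ℝ) (s a b : ℕ) (hb : b ≤ s) :
    ∑ l ∈ Finset.Icc a b, φ ^ (s - l) =
      φ ^ (s - b) * ∑ t ∈ Finset.range (b + 1 - a), φ ^ t := by
  rw [← Finset.Ico_add_one_right_eq_Icc, Finset.sum_Ico_eq_sum_range]
  rw [Finset.mul_sum]
  rw [← Finset.sum_range_reflect (fun k => φ ^ (s - b) * φ ^ k) (b + 1 - a)]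
  refine Finset.sum_congr rfl fun i hi => ?_
  simp only [Finset.mem_range] at hi
  rw [← pow_add]
  congr 1
  omega

lemma geom_split (φ : ℝ) (k n : ℕ) (h : k ≤ n) :
    ∑ t ∈ Finset.range n, φ ^ t =
      (∑ t ∈ Finset.range k, φ ^ t) + φ ^ k * ∑ t ∈ Finset.range (n - k), φ ^ t := by
  rw [show n = k + (n - k) by omega, Finset.sum_range_add, Finset.mul_sum]
  simp [pow_add]

lemma sum_insP_Icc (φ : ℝ) (s a b : ℕ) (hb : b ≤ s) :
    ∑ l ∈ Finset.Icc a b, insP φ s l =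
      φ ^ (s - b) * (∑ t ∈ Finset.range (b + 1 - a), φ ^ t) /
        ∑ t ∈ Finset.range s, φ ^ t := by
  unfold insP
  rw [← Finset.sum_div, sum_geom_Icc φ s a b hb]

lemma qpos_eq (φ : ℝ) (hφ0 : 0 ≤ φ) (s : ℕ) (hs : 1 ≤ s) :
    ∀ r : ℕ,
      qpos φ s r =
        if 1 ≤ r ∧ r ≤ s then φ ^ (r - 1) / ∑ t ∈ Finset.range s, φ ^ t
        else 0 := by
  induction s, hs using Nat.le_induction with
  | base =>
    intro r
    rcases eq_or_ne r 1 with rfl | hr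
    · simp [qpos]
    · have h1 : ¬ (1 ≤ r ∧ r ≤ 1) := by omega
      simp [qpos, hr, h1]
  | succ n hn IH =>
    intro r
    obtain ⟨m, rfl⟩ : ∃ m, n = m + 1 := ⟨n - 1, by omega⟩
    have hZ : (0:ℝ) < ∑ t ∈ Finset.range (m+1), φ ^ t := Zpos φ hφ0 _ (by omega)
    have hZ' : (0:ℝ) < ∑ t ∈ Finset.range (m+2), φ ^ t := Zpos φ hφ0 _ (by omega)
    show qpos φ (m+2) r = _
    rw [show qpos φ (m+2) r =
      qpos φ (m+1) r * (∑ l ∈ Finset.Icc (r+1) (m+2), insP φ (m+2) l)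
      + qpos φ (m+1) (r-1) * (∑ l ∈ Finset.Icc 1 (r-1), insP φ (m+2) l) from rfl]
    rcases Nat.lt_or_ge r 1 with hr0 | hr1
    · -- r = 0
      interval_cases r
      rw [IH 0]
      simp
    rcases Nat.lt_or_ge (m+2) r with hrbig | hrle
    · -- r > m+2
      have h1 : Finset.Icc (r+1) (m+2) = ∅ := by
        rw [Finset.Icc_eq_empty_iff]; omega
      rw [h1, IH (r-1), if_neg (show ¬ (1 ≤ r - 1 ∧ r - 1 ≤ m + 1) by omega),
        if_neg (show ¬ (1 ≤ r ∧ r ≤ m + 1 + 1) by omega)]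
      simp
    -- 1 ≤ r ≤ m+2
    have hif : (1 ≤ r ∧ r ≤ m + 2) := ⟨hr1, hrle⟩
    rw [if_pos hif]
    rw [sum_insP_Icc φ (m+2) (r+1) (m+2) le_rfl,
        sum_insP_Icc φ (m+2) 1 (r-1) (by omega)]
    rcases eq_or_ne r 1 with rfl | hr2
    · -- r = 1
      rw [IH 1, IH 0]
      simp only [show (1:ℕ) - 1 = 0 from rfl, pow_zero]
      rw [if_pos ⟨le_rfl, by omega⟩, if_neg (by omega)]
      have e1 : m + 2 - (m + 2) = 0 := by omega
      have e2 : m + 2 + 1 - (1 + 1) = m + 1 := by omega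
      rw [e1, e2, pow_zero]
      field_simp
      simp
    · -- 2 ≤ r
      have hr2' : 2 ≤ r := by omega
      rw [IH r, IH (r-1)]
      rcases Nat.lt_or_ge (m+1) r with hrtop | hrmid
      · -- r = m + 2
        obtain rfl : r = m + 2 := by omega
        rw [if_neg (show ¬ (1 ≤ m + 2 ∧ m + 2 ≤ m + 1) by omega),
            if_pos (show 1 ≤ m + 2 - 1 ∧ m + 2 - 1 ≤ m + 1 by omega)]
        simp only [show m + 2 - (m + 2 - 1) = 1 by omega,
          show m + 2 - 1 + 1 - 1 = m + 1 by omega,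
          show m + 2 - 1 - 1 = m by omega,
          show m + 2 - 1 = m + 1 by omega,
          show m + 2 - (m + 1) = 1 by omega, pow_one]
        field_simp
        ring
        rw [show 1 + m - 1 = m by omega]
      · -- 2 ≤ r ≤ m+1
        rw [if_pos (show 1 ≤ r ∧ r ≤ m + 1 by omega),
            if_pos (show 1 ≤ r - 1 ∧ r - 1 ≤ m + 1 by omega)]
        simp only [show m + 2 - (m + 2) = 0 by omega,
          show m + 2 + 1 - (r + 1) = m + 2 - r by omega,
          show m + 2 - (r - 1) = m + 3 - r by omega,
          show r - 1 + 1 - 1 = r - 1 by omega, pow_zero, one_mul]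
        have key := geom_split φ (m + 2 - r) (m + 1) (by omega)
        rw [show m + 1 - (m + 2 - r) = r - 1 by omega] at key
        have epow1 : φ ^ (r - 1 - 1) * φ ^ (m + 3 - r) = φ ^ (r - 1) * φ ^ (m + 2 - r) := by
          rw [← pow_add, ← pow_add]
          congr 1
          omega
        rw [div_mul_div_comm, div_mul_div_comm, ← add_div,
          div_eq_div_iff (by positivity) hZ'.ne']
        linear_combination (∑ t ∈ Finset.range (m+2), φ ^ t) *
          ((∑ t ∈ Finset.range (r-1), φ ^ t) * epow1 - φ ^ (r - 1) * key)

/-- Probability that item `j` is ranked before item 1 in the repeated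
insertion model: item `j` must be inserted at a position `l ≤ r`, where `r`
is the position of item 1 after `j-1` insertions. -/
noncomputable def probJBeforeOne (φ : ℝ) (j : ℕ) : ℝ :=
  ∑ r ∈ Finset.Icc 1 (j-1), qpos φ (j-1) r * ∑ l ∈ Finset.Icc 1 r, insP φ j l

/-- In the repeated insertion model with dispersion `0 ≤ φ < 1`, the
probability that item `j` is ranked before item 1 (for `j > 1`) equals
`φ^(j-1) (j-1 - jφ + φ^j)/((1-φ)² (1+⋯+φ^(j-2)) (1+⋯+φ^(j-1)))`. -/
theorem stmt2 (φ : ℝ) (hφ0 : 0 ≤ φ) (hφ1 : φ < 1) (j : ℕ) (hj : 2 ≤ j) :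
    probJBeforeOne φ j =
      φ ^ (j-1) * (((j:ℝ) - 1) - (j:ℝ) * φ + φ ^ j) /
        ((1 - φ)^2 * (∑ t ∈ Finset.range (j-1), φ ^ t) * (∑ t ∈ Finset.range j, φ ^ t)) := by
  obtain ⟨k, rfl⟩ : ∃ k, j = k + 2 := ⟨j - 2, by omega⟩
  have hφne : φ ≠ 1 := ne_of_lt hφ1
  have hφ1' : φ - 1 ≠ 0 := sub_ne_zero.mpr hφne
  have hZ : 0 < ∑ t ∈ Finset.range (k+1), φ ^ t := Zpos φ hφ0 _ (by omega)
  have hZ' : 0 < ∑ t ∈ Finset.range (k+2), φ ^ t := Zpos φ hφ0 _ (by omega)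
  unfold probJBeforeOne
  simp only [show k + 2 - 1 = k + 1 from rfl]
  have step : ∀ r ∈ Finset.Icc 1 (k+1),
      qpos φ (k+1) r * ∑ l ∈ Finset.Icc 1 r, insP φ (k+2) l
        = (φ ^ (k+1) /
            ((∑ t ∈ Finset.range (k+1), φ ^ t) * (∑ t ∈ Finset.range (k+2), φ ^ t)))
            * ∑ t ∈ Finset.range r, φ ^ t := by
    intro r hr
    simp only [Finset.mem_Icc] at hr
    rw [qpos_eq φ hφ0 (k+1) (by omega) r, if_pos ⟨hr.1, hr.2⟩,
        sum_insP_Icc φ (k+2) 1 r (by omega)]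
    rw [show r + 1 - 1 = r from rfl]
    have hpow : φ ^ (r-1) * φ ^ (k+2-r) = φ ^ (k+1) := by
      rw [← pow_add]; congr 1; omega
    rw [div_mul_div_comm, div_mul_eq_mul_div]
    congr 1
    linear_combination (∑ t ∈ Finset.range r, φ ^ t) * hpow
  rw [Finset.sum_congr rfl step, ← Finset.mul_sum]
  have h1φ : (0:ℝ) < 1 - φ := by linarith
  have hsum : ∑ r ∈ Finset.Icc 1 (k+1), ∑ t ∈ Finset.range r, φ ^ t
      = (((k:ℝ)+1) - ((k:ℝ)+2)*φ + φ ^ (k+2)) / (1-φ)^2 := by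
    rw [Finset.sum_congr rfl (fun r _ => geom_sum_eq hφne r)]
    rw [← Finset.Ico_add_one_right_eq_Icc, Finset.sum_Ico_eq_sum_range]
    simp only [show k + 1 + 1 - 1 = k + 1 from rfl]
    rw [← Finset.sum_div, Finset.sum_sub_distrib, Finset.sum_const, Finset.card_range]
    simp only [pow_add, pow_one, nsmul_eq_mul, mul_one]
    rw [← Finset.mul_sum, geom_sum_eq hφne]
    push_cast
    field_simp
    ring
  rw [hsum]
  push_cast
  rw [div_mul_div_comm, div_eq_div_iff (by positivity) (by positivity)]
  ring
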